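/- Assume n > 2. Then every *-structure on the Radford algebra H is of the form g* = g, x* = αx, y* = βy for some α, β ∈ ℂ with |α| = |β| = 1; that is, if * is a *-structure on H, then g* = g and there exist α, β ∈ ℂ with |α| = |β| = 1 such that x* = αx and y* = βy. -/

import Mathlib

open TensorProduct

noncomputable section

/-- The Gaussian (`q`-)binomial coefficient `C(m, k)_q`, defined by the `q`-Pascal
recurrence `C(m+1, k+1)_q = C(m, k)_q + q^(k+1) * C(m, k+1)_q`. -/
def qBinom (q : ℂ) : ℕ → ℕ → ℂ
  | _, 0 => 1
  | 0, _ + 1 => 0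
  | m + 1, k + 1 => qBinom q m k + q ^ (k + 1) * qBinom q m (k + 1)

/-- The Radford algebra: a Hopf algebra `H` over `ℂ` generated by elements
`g, x, y` subject to the relations `g^n = 1`, `x^n = y^n = 0`, `xg = ω g x`,
`g y = ω y g`, `x y = ω y x`, where `ω` is a root of unity of order `n > 1`,
with the comultiplication, counit and antipode determined by
`Δ(g) = g ⊗ g`, `ε(g) = 1`, `S(g) = g^(n-1)`,
`Δ(x) = x ⊗ g + 1 ⊗ x`, `ε(x) = 0`, `S(x) = -x g^(n-1)`,
`Δ(y) = y ⊗ g + 1 ⊗ y`, `ε(y) = 0`, `S(y) = -y g^(n-1)`,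
and with canonical `ℂ`-basis `{y^r x^s g^l | 0 ≤ r, s, l < n}`. -/
structure RadfordAlgebra (n : ℕ) (ω : ℂ) (H : Type*) [Ring H] [HopfAlgebra ℂ H] where
  g : H
  x : H
  y : H
  hn : 1 < n
  hω : IsPrimitiveRoot ω n
  g_pow : g ^ n = 1
  x_pow : x ^ n = 0
  y_pow : y ^ n = 0
  rel_xg : x * g = ω • (g * x)
  rel_gy : g * y = ω • (y * g)
  rel_xy : x * y = ω • (y * x)
  comul_g : Coalgebra.comul (R := ℂ) g = g ⊗ₜ[ℂ] g
  counit_g : Coalgebra.counit (R := ℂ) g = 1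
  antipode_g : HopfAlgebra.antipode (R := ℂ) g = g ^ (n - 1)
  comul_x : Coalgebra.comul (R := ℂ) x = x ⊗ₜ[ℂ] g + 1 ⊗ₜ[ℂ] x
  counit_x : Coalgebra.counit (R := ℂ) x = 0
  antipode_x : HopfAlgebra.antipode (R := ℂ) x = -(x * g ^ (n - 1))
  comul_y : Coalgebra.comul (R := ℂ) y = y ⊗ₜ[ℂ] g + 1 ⊗ₜ[ℂ] y
  counit_y : Coalgebra.counit (R := ℂ) y = 0
  antipode_y : HopfAlgebra.antipode (R := ℂ) y = -(y * g ^ (n - 1))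
  gen : Algebra.adjoin ℂ ({g, x, y} : Set H) = ⊤
  basis : Module.Basis (Fin n × Fin n × Fin n) ℂ H
  basis_eq : ∀ r s l : Fin n, basis (r, s, l) = y ^ (r : ℕ) * x ^ (s : ℕ) * g ^ (l : ℕ)

/-- A `*`-structure on a Hopf algebra `H` over `ℂ`: a conjugate-linear map
`* : H → H` such that `(h*)* = h`, `(hl)* = l* h*`,
`Δ(h*) = Σ (h₁)* ⊗ (h₂)*` and `S(S(h*)*) = h` for all `h, l ∈ H`.
(The condition on `Δ` is expressed via the auxiliary additive map `starTensor`
on `H ⊗[ℂ] H` sending `a ⊗ b` to `a* ⊗ b*`, which is uniquely determined by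
its two defining properties.) -/
structure HopfStarStructure (H : Type*) [Ring H] [HopfAlgebra ℂ H] where
  star : H → H
  star_add : ∀ a b : H, star (a + b) = star a + star b
  star_smul : ∀ (c : ℂ) (a : H), star (c • a) = (starRingEnd ℂ c) • star a
  star_star : ∀ a : H, star (star a) = a
  star_mul : ∀ a b : H, star (a * b) = star b * star a
  starTensor : H ⊗[ℂ] H → H ⊗[ℂ] H
  starTensor_add : ∀ u v : H ⊗[ℂ] H, starTensor (u + v) = starTensor u + starTensor v
  starTensor_tmul : ∀ a b : H, starTensor (a ⊗ₜ[ℂ] b) = star a ⊗ₜ[ℂ] star b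
  comul_star : ∀ a : H,
    Coalgebra.comul (R := ℂ) (star a) = starTensor (Coalgebra.comul (R := ℂ) a)
  antipode_star : ∀ a : H,
    HopfAlgebra.antipode (R := ℂ) (star (HopfAlgebra.antipode (R := ℂ) (star a))) = a

/-- Two `*`-structures `*'` and `*''` on a Hopf algebra `H` over `ℂ` are
equivalent if there is a Hopf algebra automorphism `ψ` of `H` such that
`ψ(h^{*'}) = ψ(h)^{*''}` for all `h ∈ H`. -/
def HopfStarStructure.Equivalent {H : Type*} [Ring H] [HopfAlgebra ℂ H]
    (s₁ s₂ : HopfStarStructure H) : Prop :=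
  ∃ ψ : H ≃ₐc[ℂ] H, ∀ h : H, ψ (s₁.star h) = s₂.star (ψ h)

lemma qBinom_zero_right (q : ℂ) (m : ℕ) : qBinom q m 0 = 1 := by
  cases m <;> rfl

lemma qBinom_of_lt (q : ℂ) : ∀ {m k : ℕ}, m < k → qBinom q m k = 0 := by
  intro m
  induction m with
  | zero => intro k hk; obtain ⟨k, rfl⟩ := Nat.exists_eq_add_of_lt hk; rfl
  | succ m ih =>
    intro k hk
    obtain ⟨j, rfl⟩ : ∃ j, k = j + 1 := ⟨k - 1, by omega⟩
    show qBinom q m j + q ^ (j + 1) * qBinom q m (j + 1) = 0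
    rw [ih (by omega), ih (by omega), mul_zero, add_zero]

lemma qBinom_self (q : ℂ) (m : ℕ) : qBinom q m m = 1 := by
  induction m with
  | zero => rfl
  | succ m ih =>
    show qBinom q m m + q ^ (m + 1) * qBinom q m (m + 1) = 1
    rw [ih, qBinom_of_lt q (by omega), mul_zero, add_zero]

lemma pow_mul_of_comm {A : Type*} [Semiring A] [Algebra ℂ A] (q : ℂ) (u v : A)
    (h : u * v = q • (v * u)) (t s : ℕ) :
    u ^ t * v ^ s = q ^ (t * s) • (v ^ s * u ^ t) := by
  have base : ∀ s : ℕ, u * v ^ s = q ^ s • (v ^ s * u) := by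
    intro s
    induction s with
    | zero => simp
    | succ s ih =>
      calc u * v ^ (s + 1) = (u * v ^ s) * v := by rw [mul_assoc, ← pow_succ]
        _ = q ^ s • (v ^ s * (u * v)) := by rw [ih, smul_mul_assoc, mul_assoc]
        _ = q ^ s • (v ^ s * (q • (v * u))) := by rw [h]
        _ = q ^ (s + 1) • (v ^ (s + 1) * u) := by
            rw [mul_smul_comm, smul_smul, ← mul_assoc, ← pow_succ v, ← pow_succ q]
  induction t with
  | zero => simp
  | succ t ih =>
    calc u ^ (t + 1) * v ^ s = u ^ t * (u * v ^ s) := by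
          rw [pow_succ, mul_assoc]
      _ = q ^ s • (u ^ t * (v ^ s * u)) := by rw [base, mul_smul_comm]
      _ = q ^ s • ((q ^ (t * s) • (v ^ s * u ^ t)) * u) := by rw [← mul_assoc, ih]
      _ = q ^ ((t + 1) * s) • (v ^ s * u ^ (t + 1)) := by
          rw [smul_mul_assoc, smul_smul, mul_assoc, ← pow_succ, ← pow_add]
          congr 2
          ring

lemma q_add_pow {A : Type*} [Semiring A] [Algebra ℂ A] (q : ℂ) (a b : A)
    (hc : b * a = q • (a * b)) (m : ℕ) :
    (a + b) ^ m = ∑ k ∈ Finset.range (m + 1), qBinom q m k • (a ^ (m - k) * b ^ k) := by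
  induction m with
  | zero => simp [qBinom]
  | succ m ih =>
    have hbk : ∀ k : ℕ, b ^ k * a = q ^ k • (a * b ^ k) := by
      intro k
      have := pow_mul_of_comm q b a hc k 1
      simpa using this
    rw [pow_succ, ih, Finset.sum_mul]
    have hterm : ∀ k ∈ Finset.range (m + 1),
        (qBinom q m k • (a ^ (m - k) * b ^ k)) * (a + b)
          = (qBinom q m k * q ^ k) • (a ^ (m + 1 - k) * b ^ k)
            + qBinom q m k • (a ^ (m - k) * b ^ (k + 1)) := by
      intro k hk
      have hk' : k ≤ m := by simpa [Nat.lt_succ_iff] using hk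
      rw [mul_add, smul_mul_assoc, smul_mul_assoc, mul_assoc, hbk, mul_smul_comm,
        smul_smul, mul_assoc, ← pow_succ]
      congr 2
      · rw [← mul_assoc, ← pow_succ]
        congr 2
        omega
    rw [Finset.sum_congr rfl hterm, Finset.sum_add_distrib]
    -- RHS manipulation
    have hrhs : ∑ k ∈ Finset.range (m + 2), qBinom q (m + 1) k • (a ^ (m + 1 - k) * b ^ k)
        = ∑ j ∈ Finset.range (m + 1),
            (qBinom q m j • (a ^ (m - j) * b ^ (j + 1))
              + (qBinom q m (j + 1) * q ^ (j + 1)) • (a ^ (m + 1 - (j + 1)) * b ^ (j + 1)))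
          + a ^ (m + 1) := by
      rw [Finset.sum_range_succ' (fun k => qBinom q (m + 1) k • (a ^ (m + 1 - k) * b ^ k)) (m + 1)]
      simp only [qBinom, Nat.sub_zero, pow_zero, mul_one]
      congr 1
      · apply Finset.sum_congr rfl
        intro j hj
        have e : m + 1 - (j + 1) = m - j := by omega
        rw [e, add_smul, mul_comm (q ^ (j + 1)) (qBinom q m (j + 1))]
      · rw [one_smul]
    rw [hrhs, Finset.sum_add_distrib]
    -- match pieces
    have h1 : ∑ k ∈ Finset.range (m + 1), (qBinom q m k * q ^ k) • (a ^ (m + 1 - k) * b ^ k)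
        = ∑ j ∈ Finset.range (m + 1),
            (qBinom q m (j + 1) * q ^ (j + 1)) • (a ^ (m + 1 - (j + 1)) * b ^ (j + 1))
          + a ^ (m + 1) := by
      rw [Finset.sum_range_succ' (fun k => (qBinom q m k * q ^ k) • (a ^ (m + 1 - k) * b ^ k)) m]
      congr 1
      · rw [Finset.sum_range_succ, qBinom_of_lt q (by omega)]
        simp
      · rw [qBinom_zero_right]
        simp
    rw [h1]
    abel
namespace RadfordAlgebra

variable {n : ℕ} {ω : ℂ} {H : Type*} [Ring H] [HopfAlgebra ℂ H]

section Lemmas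
variable (R : RadfordAlgebra n ω H)

lemma npos (R : RadfordAlgebra n ω H) : 0 < n := lt_trans Nat.zero_lt_one R.hn

lemma omega_ne (R : RadfordAlgebra n ω H) : ω ≠ 0 := by
  intro h
  have := R.hω.pow_eq_one
  rw [h, zero_pow R.npos.ne'] at this
  exact zero_ne_one this

lemma g_mul_x : R.g * R.x = ω⁻¹ • (R.x * R.g) := by
  rw [R.rel_xg, smul_smul, inv_mul_cancel₀ R.omega_ne, one_smul]

lemma gpow_xpow (t s : ℕ) : R.g ^ t * R.x ^ s = (ω⁻¹) ^ (t * s) • (R.x ^ s * R.g ^ t) :=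
  pow_mul_of_comm ω⁻¹ R.g R.x R.g_mul_x t s

lemma gpow_ypow (t s : ℕ) : R.g ^ t * R.y ^ s = ω ^ (t * s) • (R.y ^ s * R.g ^ t) :=
  pow_mul_of_comm ω R.g R.y R.rel_gy t s

lemma gpow_mod (m : ℕ) : R.g ^ m = R.g ^ (m % n) := by
  conv_lhs => rw [← Nat.div_add_mod m n]
  rw [pow_add, pow_mul, R.g_pow, one_pow, one_mul]

lemma mono_basis (a b c : ℕ) (ha : a < n) (hb : b < n) :
    R.y ^ a * R.x ^ b * R.g ^ c
      = R.basis (⟨a, ha⟩, ⟨b, hb⟩, ⟨c % n, Nat.mod_lt _ R.npos⟩) := by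
  rw [R.basis_eq, R.gpow_mod c]

lemma repr_mono (a b c : ℕ) (ha : a < n) (hb : b < n) (v : Fin n × Fin n × Fin n) :
    R.basis.repr (R.y ^ a * R.x ^ b * R.g ^ c) v
      = if (v.1 : ℕ) = a ∧ (v.2.1 : ℕ) = b ∧ (v.2.2 : ℕ) = c % n then 1 else 0 := by
  rw [R.mono_basis a b c ha hb, R.basis.repr_self, Finsupp.single_apply]
  refine if_congr ?_ rfl rfl
  simp only [Prod.ext_iff, Fin.ext_iff, Fin.val_mk]
  tauto

lemma comul_mul (R : RadfordAlgebra n ω H) (a b : H) :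
    Coalgebra.comul (R := ℂ) (a * b)
      = Coalgebra.comul (R := ℂ) a * Coalgebra.comul (R := ℂ) b := by
  have := map_mul (Bialgebra.comulAlgHom ℂ H) a b
  simpa [Bialgebra.comulAlgHom_apply] using this

lemma comul_pow (R : RadfordAlgebra n ω H) (a : H) (k : ℕ) :
    Coalgebra.comul (R := ℂ) (a ^ k) = (Coalgebra.comul (R := ℂ) a) ^ k := by
  have := map_pow (Bialgebra.comulAlgHom ℂ H) a k
  simpa [Bialgebra.comulAlgHom_apply] using this

lemma comul_gpow (R : RadfordAlgebra n ω H) (l : ℕ) :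
    Coalgebra.comul (R := ℂ) (R.g ^ l) = (R.g ^ l) ⊗ₜ[ℂ] (R.g ^ l) := by
  rw [R.comul_pow, R.comul_g, Algebra.TensorProduct.tmul_pow]

lemma comul_ypow (R : RadfordAlgebra n ω H) (r : ℕ) :
    Coalgebra.comul (R := ℂ) (R.y ^ r) = ∑ j ∈ Finset.range (r + 1),
      (qBinom ω⁻¹ r j * ω ^ ((r - j) * j)) •
        ((R.y ^ (r - j)) ⊗ₜ[ℂ] (R.y ^ j * R.g ^ (r - j))) := by
  have hmul : ((1 : H) ⊗ₜ[ℂ] R.y) * (R.y ⊗ₜ[ℂ] R.g)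
      = ω⁻¹ • ((R.y ⊗ₜ[ℂ] R.g) * ((1 : H) ⊗ₜ[ℂ] R.y)) := by
    rw [Algebra.TensorProduct.tmul_mul_tmul, Algebra.TensorProduct.tmul_mul_tmul,
      one_mul, mul_one, R.rel_gy, tmul_smul, smul_smul,
      inv_mul_cancel₀ R.omega_ne, one_smul]
  rw [R.comul_pow, R.comul_y, q_add_pow ω⁻¹ _ _ hmul r]
  refine Finset.sum_congr rfl fun j hj => ?_
  rw [Algebra.TensorProduct.tmul_pow, Algebra.TensorProduct.tmul_pow,
    Algebra.TensorProduct.tmul_mul_tmul, one_pow, mul_one, R.gpow_ypow,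
    tmul_smul, smul_smul]

lemma comul_xpow (R : RadfordAlgebra n ω H) (s : ℕ) :
    Coalgebra.comul (R := ℂ) (R.x ^ s) = ∑ k ∈ Finset.range (s + 1),
      (qBinom ω s k * (ω⁻¹) ^ ((s - k) * k)) •
        ((R.x ^ (s - k)) ⊗ₜ[ℂ] (R.x ^ k * R.g ^ (s - k))) := by
  have hmul : ((1 : H) ⊗ₜ[ℂ] R.x) * (R.x ⊗ₜ[ℂ] R.g)
      = ω • ((R.x ⊗ₜ[ℂ] R.g) * ((1 : H) ⊗ₜ[ℂ] R.x)) := by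
    rw [Algebra.TensorProduct.tmul_mul_tmul, Algebra.TensorProduct.tmul_mul_tmul,
      one_mul, mul_one, R.rel_xg, tmul_smul]
  rw [R.comul_pow, R.comul_x, q_add_pow ω _ _ hmul s]
  refine Finset.sum_congr rfl fun k hk => ?_
  rw [Algebra.TensorProduct.tmul_pow, Algebra.TensorProduct.tmul_pow,
    Algebra.TensorProduct.tmul_mul_tmul, one_pow, mul_one, R.gpow_xpow,
    tmul_smul, smul_smul]

lemma leg_mul (R : RadfordAlgebra n ω H) (j k m1 m2 : ℕ) :
    (R.y ^ j * R.g ^ m1) * (R.x ^ k * R.g ^ m2)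
      = (ω⁻¹) ^ (m1 * k) • (R.y ^ j * R.x ^ k * R.g ^ (m1 + m2)) := by
  rw [mul_assoc, ← mul_assoc (R.g ^ m1), R.gpow_xpow, smul_mul_assoc, mul_smul_comm,
    mul_assoc (R.x ^ k), ← pow_add, ← mul_assoc]

lemma comul_mono (R : RadfordAlgebra n ω H) (r s l : ℕ) :
    Coalgebra.comul (R := ℂ) (R.y ^ r * R.x ^ s * R.g ^ l)
      = ∑ j ∈ Finset.range (r + 1), ∑ k ∈ Finset.range (s + 1),
        (qBinom ω⁻¹ r j * qBinom ω s k * ω ^ ((r - j) * j) * (ω⁻¹) ^ ((s - k) * k)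
            * (ω⁻¹) ^ ((r - j) * k)) •
          ((R.y ^ (r - j) * R.x ^ (s - k) * R.g ^ l) ⊗ₜ[ℂ]
            (R.y ^ j * R.x ^ k * R.g ^ ((r - j) + (s - k) + l))) := by
  rw [R.comul_mul, R.comul_mul, R.comul_ypow, R.comul_xpow, R.comul_gpow,
    Finset.sum_mul, Finset.sum_mul]
  refine Finset.sum_congr rfl fun j hj => ?_
  rw [Finset.mul_sum, Finset.sum_mul]
  refine Finset.sum_congr rfl fun k hk => ?_
  simp only [smul_mul_assoc, mul_smul_comm, smul_smul]
  rw [Algebra.TensorProduct.tmul_mul_tmul, R.leg_mul, tmul_smul, smul_mul_assoc,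
    smul_smul, Algebra.TensorProduct.tmul_mul_tmul,
    mul_assoc (R.y ^ j * R.x ^ k), ← pow_add]
  congr 1
  ring

lemma ypow_hi (R : RadfordAlgebra n ω H) {a : ℕ} (ha : n ≤ a) : R.y ^ a = 0 := by
  rw [show a = n + (a - n) by omega, pow_add, R.y_pow, zero_mul]

lemma xpow_hi (R : RadfordAlgebra n ω H) {a : ℕ} (ha : n ≤ a) : R.x ^ a = 0 := by
  rw [show a = n + (a - n) by omega, pow_add, R.x_pow, zero_mul]

lemma repr_mono' (R : RadfordAlgebra n ω H) (a b c : ℕ) (v : Fin n × Fin n × Fin n) :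
    R.basis.repr (R.y ^ a * R.x ^ b * R.g ^ c) v
      = if (v.1 : ℕ) = a ∧ (v.2.1 : ℕ) = b ∧ (v.2.2 : ℕ) = c % n then 1 else 0 := by
  by_cases ha : a < n
  · by_cases hb : b < n
    · exact R.repr_mono a b c ha hb v
    · rw [R.xpow_hi (by omega), mul_zero, zero_mul, map_zero, Finsupp.coe_zero,
        Pi.zero_apply, if_neg]
      rintro ⟨-, h2, -⟩
      exact hb (h2 ▸ v.2.1.isLt)
  · rw [R.ypow_hi (by omega), zero_mul, zero_mul, map_zero, Finsupp.coe_zero,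
      Pi.zero_apply, if_neg]
    rintro ⟨h1, -, -⟩
    exact ha (h1 ▸ v.1.isLt)

lemma repr_comul_basis (R : RadfordAlgebra n ω H) (u v w : Fin n × Fin n × Fin n) :
    (R.basis.tensorProduct R.basis).repr (Coalgebra.comul (R := ℂ) (R.basis u)) (v, w)
      = if (v.1 : ℕ) + (w.1 : ℕ) = (u.1 : ℕ) ∧ (v.2.1 : ℕ) + (w.2.1 : ℕ) = (u.2.1 : ℕ)
            ∧ v.2.2 = u.2.2
            ∧ (w.2.2 : ℕ) = ((v.1 : ℕ) + (v.2.1 : ℕ) + (v.2.2 : ℕ)) % n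
        then qBinom ω⁻¹ (u.1 : ℕ) (w.1 : ℕ) * qBinom ω (u.2.1 : ℕ) (w.2.1 : ℕ)
              * ω ^ ((v.1 : ℕ) * (w.1 : ℕ)) * (ω⁻¹) ^ ((v.2.1 : ℕ) * (w.2.1 : ℕ))
              * (ω⁻¹) ^ ((v.1 : ℕ) * (w.2.1 : ℕ))
        else 0 := by
  obtain ⟨r, s, l⟩ := u
  obtain ⟨v1, v2, v3⟩ := v
  obtain ⟨w1, w2, w3⟩ := w
  rw [R.basis_eq, R.comul_mono]
  simp only [map_sum, map_smul, Finset.sum_apply', Finsupp.smul_apply,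
    Module.Basis.tensorProduct_repr_tmul_apply, R.repr_mono', smul_eq_mul]
  by_cases hBig : (v1 : ℕ) + (w1 : ℕ) = (r : ℕ) ∧ (v2 : ℕ) + (w2 : ℕ) = (s : ℕ)
      ∧ v3 = l ∧ (w3 : ℕ) = ((v1 : ℕ) + (v2 : ℕ) + (v3 : ℕ)) % n
  · obtain ⟨h1, h2, h3, h4⟩ := hBig
    rw [Fin.ext_iff] at h3
    have e1 : (r : ℕ) - (w1 : ℕ) = (v1 : ℕ) := by omega
    have e2 : (s : ℕ) - (w2 : ℕ) = (v2 : ℕ) := by omega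
    have e3 : (v3 : ℕ) = (l : ℕ) % n := by rw [h3]; exact (Nat.mod_eq_of_lt l.isLt).symm
    have cW : (w1 : ℕ) = (w1 : ℕ) ∧ (w2 : ℕ) = (w2 : ℕ)
        ∧ (w3 : ℕ) = ((r : ℕ) - (w1 : ℕ) + ((s : ℕ) - (w2 : ℕ)) + (l : ℕ)) % n := by
      refine ⟨rfl, rfl, ?_⟩
      rw [h4]
      congr 1
      omega
    have cV : (v1 : ℕ) = (r : ℕ) - (w1 : ℕ) ∧ (v2 : ℕ) = (s : ℕ) - (w2 : ℕ)
        ∧ (v3 : ℕ) = (l : ℕ) % n := ⟨e1.symm, e2.symm, e3⟩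
    rw [if_pos ⟨h1, h2, Fin.ext h3, h4⟩]
    refine (Finset.sum_eq_single ((w1 : ℕ)) ?_ ?_).trans ?_
    · intro j hj hne
      refine Finset.sum_eq_zero fun k hk => ?_
      rw [if_neg fun h => hne h.1.symm, zero_mul, mul_zero]
    · intro habs
      exact absurd (Finset.mem_range.mpr (by omega)) habs
    refine (Finset.sum_eq_single ((w2 : ℕ)) ?_ ?_).trans ?_
    · intro k hk hne
      rw [if_neg fun h => hne h.2.1.symm, zero_mul, mul_zero]
    · intro habs
      exact absurd (Finset.mem_range.mpr (by omega)) habs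
    rw [if_pos cW, if_pos cV, one_mul, mul_one, e1, e2]
  · rw [if_neg hBig]
    refine Finset.sum_eq_zero fun j hj => Finset.sum_eq_zero fun k hk => ?_
    rw [Finset.mem_range] at hj hk
    by_cases hW : (w1 : ℕ) = j ∧ (w2 : ℕ) = k
        ∧ (w3 : ℕ) = ((r : ℕ) - j + ((s : ℕ) - k) + (l : ℕ)) % n
    · by_cases hV : (v1 : ℕ) = (r : ℕ) - j ∧ (v2 : ℕ) = (s : ℕ) - k
          ∧ (v3 : ℕ) = (l : ℕ) % n
      · exfalso
        apply hBig
        obtain ⟨hw1, hw2, hw3⟩ := hW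
        obtain ⟨hv1, hv2, hv3⟩ := hV
        have hl : (l : ℕ) % n = (l : ℕ) := Nat.mod_eq_of_lt l.isLt
        refine ⟨by omega, by omega, Fin.ext (by omega), ?_⟩
        rw [hw3]
        congr 1
        omega
      · rw [if_neg hV, mul_zero, mul_zero]
    · rw [if_neg hW, zero_mul, mul_zero]

lemma repr_comul (R : RadfordAlgebra n ω H) (p : H) (v w : Fin n × Fin n × Fin n)
    (hr : (v.1 : ℕ) + (w.1 : ℕ) < n) (hs : (v.2.1 : ℕ) + (w.2.1 : ℕ) < n) :
    (R.basis.tensorProduct R.basis).repr (Coalgebra.comul (R := ℂ) p) (v, w)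
      = if (w.2.2 : ℕ) = ((v.1 : ℕ) + (v.2.1 : ℕ) + (v.2.2 : ℕ)) % n
        then qBinom ω⁻¹ ((v.1 : ℕ) + (w.1 : ℕ)) (w.1 : ℕ)
            * qBinom ω ((v.2.1 : ℕ) + (w.2.1 : ℕ)) (w.2.1 : ℕ)
            * ω ^ ((v.1 : ℕ) * (w.1 : ℕ)) * (ω⁻¹) ^ ((v.2.1 : ℕ) * (w.2.1 : ℕ))
            * (ω⁻¹) ^ ((v.1 : ℕ) * (w.2.1 : ℕ))
            * R.basis.repr p (⟨(v.1 : ℕ) + (w.1 : ℕ), hr⟩, ⟨(v.2.1 : ℕ) + (w.2.1 : ℕ), hs⟩, v.2.2)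
        else 0 := by
  conv_lhs => rw [← R.basis.sum_repr p]
  rw [map_sum, map_sum, Finset.sum_apply']
  simp only [map_smul, Finsupp.smul_apply, smul_eq_mul, R.repr_comul_basis]
  refine (Fintype.sum_eq_single
    ((⟨(v.1 : ℕ) + (w.1 : ℕ), hr⟩, ⟨(v.2.1 : ℕ) + (w.2.1 : ℕ), hs⟩, v.2.2) :
      Fin n × Fin n × Fin n) ?_).trans ?_
  · intro u hu
    rw [if_neg, mul_zero]
    rintro ⟨c1, c2, c3, -⟩
    refine hu ?_
    obtain ⟨u1, u2, u3⟩ := u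
    simp only [Prod.mk.injEq]
    exact ⟨Fin.ext c1.symm, Fin.ext c2.symm, c3.symm⟩
  · by_cases hcond : (w.2.2 : ℕ) = ((v.1 : ℕ) + (v.2.1 : ℕ) + (v.2.2 : ℕ)) % n
    · rw [if_pos ⟨rfl, rfl, rfl, hcond⟩, if_pos hcond]
      ring
    · rw [if_neg (fun h => hcond h.2.2.2), if_neg hcond, mul_zero]

lemma repr_comul_E1 [NeZero n] (R : RadfordAlgebra n ω H) (p : H) (r s l m : Fin n) :
    (R.basis.tensorProduct R.basis).repr (Coalgebra.comul (R := ℂ) p) ((r, s, l), (0, 0, m))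
      = if (m : ℕ) = ((r : ℕ) + (s : ℕ) + (l : ℕ)) % n
        then R.basis.repr p (r, s, l) else 0 := by
  rw [R.repr_comul p (r, s, l) (0, 0, m) (by simpa using r.isLt) (by simpa using s.isLt)]
  simp only [Fin.val_zero, Nat.add_zero, Nat.mul_zero, qBinom_zero_right, pow_zero,
    mul_one, one_mul, Fin.eta]

lemma repr_comul_E2 [NeZero n] (R : RadfordAlgebra n ω H) (p : H) (l r' s' l' : Fin n) :
    (R.basis.tensorProduct R.basis).repr (Coalgebra.comul (R := ℂ) p) ((0, 0, l), (r', s', l'))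
      = if l' = l then R.basis.repr p (r', s', l) else 0 := by
  rw [R.repr_comul p (0, 0, l) (r', s', l') (by simpa using r'.isLt) (by simpa using s'.isLt)]
  have hc : ((l' : ℕ) = (l : ℕ) % n) ↔ l' = l := by
    simp [Fin.ext_iff, Nat.mod_eq_of_lt l.isLt]
  simp only [Fin.val_zero, Nat.zero_add, Nat.zero_mul, qBinom_self, pow_zero,
    mul_one, one_mul, Fin.eta, Nat.add_zero]
  rw [if_congr hc rfl rfl]

lemma repr_comul_E3 [NeZero n] (R : RadfordAlgebra n ω H) (p : H) (r l s' m : Fin n) :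
    (R.basis.tensorProduct R.basis).repr (Coalgebra.comul (R := ℂ) p) ((r, 0, l), (0, s', m))
      = if (m : ℕ) = ((r : ℕ) + (l : ℕ)) % n
        then (ω⁻¹) ^ ((r : ℕ) * (s' : ℕ)) * R.basis.repr p (r, s', l) else 0 := by
  rw [R.repr_comul p (r, 0, l) (0, s', m) (by simpa using r.isLt) (by simpa using s'.isLt)]
  simp only [Fin.val_zero, Nat.add_zero, Nat.zero_add, Nat.mul_zero, Nat.zero_mul,
    qBinom_zero_right, qBinom_self, pow_zero, mul_one, one_mul, Fin.eta]

lemma gpow_mono (R : RadfordAlgebra n ω H) (t a b c : ℕ) :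
    R.g ^ t * (R.y ^ a * R.x ^ b * R.g ^ c)
      = (ω ^ (t * a) * (ω⁻¹) ^ (t * b)) • (R.y ^ a * R.x ^ b * R.g ^ (c + t)) := by
  rw [← mul_assoc, ← mul_assoc, R.gpow_ypow, smul_mul_assoc, smul_mul_assoc,
    mul_assoc (R.y ^ a), R.gpow_xpow, mul_smul_comm, smul_mul_assoc, smul_smul,
    ← mul_assoc, mul_assoc (R.y ^ a * R.x ^ b), ← pow_add, Nat.add_comm t c]

lemma mono_mul_gpow (R : RadfordAlgebra n ω H) (t a b c : ℕ) :
    (R.y ^ a * R.x ^ b * R.g ^ c) * R.g ^ t = R.y ^ a * R.x ^ b * R.g ^ (c + t) := by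
  rw [mul_assoc, ← pow_add]

lemma repr_mul_gpow (R : RadfordAlgebra n ω H) (p : H) (t : ℕ) (r s l m : Fin n)
    (hm : (m : ℕ) = ((l : ℕ) + t) % n) :
    R.basis.repr (p * R.g ^ t) (r, s, m) = R.basis.repr p (r, s, l) := by
  have key : ∀ u : Fin n × Fin n × Fin n,
      R.basis.repr (R.basis u * R.g ^ t) (r, s, m)
        = if (r : ℕ) = (u.1 : ℕ) ∧ (s : ℕ) = (u.2.1 : ℕ)
            ∧ (m : ℕ) = ((u.2.2 : ℕ) + t) % n then 1 else 0 := by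
    intro u
    rw [show R.basis u = R.y ^ (u.1 : ℕ) * R.x ^ (u.2.1 : ℕ) * R.g ^ (u.2.2 : ℕ) from
      R.basis_eq u.1 u.2.1 u.2.2, R.mono_mul_gpow, R.repr_mono']
  conv_lhs => rw [← R.basis.sum_repr p]
  rw [Finset.sum_mul]
  simp only [smul_mul_assoc, map_sum, map_smul, Finset.sum_apply', Finsupp.smul_apply,
    smul_eq_mul, key]
  refine (Fintype.sum_eq_single ((r, s, l) : Fin n × Fin n × Fin n) ?_).trans ?_
  · intro u hu
    rw [if_neg, mul_zero]
    rintro ⟨h1, h2, h3⟩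
    refine hu ?_
    obtain ⟨u1, u2, u3⟩ := u
    simp only [Prod.mk.injEq]
    have hmod : ((u3 : ℕ) + t) % n = ((l : ℕ) + t) % n := h3.symm.trans hm
    have : (u3 : ℕ) % n = (l : ℕ) % n := Nat.ModEq.add_right_cancel' t hmod
    rw [Nat.mod_eq_of_lt u3.isLt, Nat.mod_eq_of_lt l.isLt] at this
    exact ⟨Fin.ext h1.symm, Fin.ext h2.symm, Fin.ext this⟩
  · rw [if_pos ⟨rfl, rfl, hm⟩, mul_one]

lemma repr_gpow_mul (R : RadfordAlgebra n ω H) (p : H) (t : ℕ) (r s l m : Fin n)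
    (hm : (m : ℕ) = ((l : ℕ) + t) % n) :
    R.basis.repr (R.g ^ t * p) (r, s, m)
      = ω ^ (t * (r : ℕ)) * (ω⁻¹) ^ (t * (s : ℕ)) * R.basis.repr p (r, s, l) := by
  have key : ∀ u : Fin n × Fin n × Fin n,
      R.basis.repr (R.g ^ t * R.basis u) (r, s, m)
        = (ω ^ (t * (u.1 : ℕ)) * (ω⁻¹) ^ (t * (u.2.1 : ℕ)))
            * (if (r : ℕ) = (u.1 : ℕ) ∧ (s : ℕ) = (u.2.1 : ℕ)
                ∧ (m : ℕ) = ((u.2.2 : ℕ) + t) % n then 1 else 0) := by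
    intro u
    rw [show R.basis u = R.y ^ (u.1 : ℕ) * R.x ^ (u.2.1 : ℕ) * R.g ^ (u.2.2 : ℕ) from
      R.basis_eq u.1 u.2.1 u.2.2, R.gpow_mono, map_smul, Finsupp.smul_apply,
      R.repr_mono', smul_eq_mul]
  conv_lhs => rw [← R.basis.sum_repr p]
  rw [Finset.mul_sum]
  simp only [mul_smul_comm, map_sum, map_smul, Finset.sum_apply', Finsupp.smul_apply,
    smul_eq_mul, key]
  refine (Fintype.sum_eq_single ((r, s, l) : Fin n × Fin n × Fin n) ?_).trans ?_
  · intro u hu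
    rw [if_neg, mul_zero, mul_zero]
    rintro ⟨h1, h2, h3⟩
    refine hu ?_
    obtain ⟨u1, u2, u3⟩ := u
    simp only [Prod.mk.injEq]
    have hmod : ((u3 : ℕ) + t) % n = ((l : ℕ) + t) % n := h3.symm.trans hm
    have : (u3 : ℕ) % n = (l : ℕ) % n := Nat.ModEq.add_right_cancel' t hmod
    rw [Nat.mod_eq_of_lt u3.isLt, Nat.mod_eq_of_lt l.isLt] at this
    exact ⟨Fin.ext h1.symm, Fin.ext h2.symm, Fin.ext this⟩
  · rw [if_pos ⟨rfl, rfl, hm⟩, mul_one]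
    ring

lemma omega_pow_mod (R : RadfordAlgebra n ω H) (m : ℕ) : ω ^ m = ω ^ (m % n) := by
  conv_lhs => rw [← Nat.div_add_mod m n]
  rw [pow_add, pow_mul, R.hω.pow_eq_one, one_pow, one_mul]

lemma gpow_inj (R : RadfordAlgebra n ω H) {a b : ℕ} (h : R.g ^ a = R.g ^ b) :
    a % n = b % n := by
  have ea : R.y ^ 0 * R.x ^ 0 * R.g ^ a = R.g ^ a := by simp
  have eb : R.y ^ 0 * R.x ^ 0 * R.g ^ b = R.g ^ b := by simp
  have h' := (ea.trans (h.trans eb.symm))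
  rw [R.mono_basis 0 0 a R.npos R.npos, R.mono_basis 0 0 b R.npos R.npos] at h'
  have := R.basis.injective h'
  simpa using congrArg (fun u : Fin n × Fin n × Fin n => (u.2.2 : ℕ)) this

lemma eq_smul_basis_of_repr (R : RadfordAlgebra n ω H) (p : H)
    (v₀ : Fin n × Fin n × Fin n) (hv : ∀ v ≠ v₀, R.basis.repr p v = 0) :
    p = R.basis.repr p v₀ • R.basis v₀ := by
  apply R.basis.repr.injective
  ext v
  rw [map_smul, Finsupp.smul_apply, R.basis.repr_self, smul_eq_mul, Finsupp.single_apply]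
  by_cases h : v = v₀
  · subst h
    rw [if_pos rfl, mul_one]
  · rw [hv v h, if_neg (Ne.symm h), mul_zero]

lemma grouplike_classify [NeZero n] (R : RadfordAlgebra n ω H) (h : H) (hne : h ≠ 0)
    (hΔ : Coalgebra.comul (R := ℂ) h = h ⊗ₜ[ℂ] h) :
    ∃ l₀ : Fin n, h = R.g ^ (l₀ : ℕ) := by
  have E1 : ∀ r s l m : Fin n,
      (if (m : ℕ) = ((r : ℕ) + (s : ℕ) + (l : ℕ)) % n
        then R.basis.repr h (r, s, l) else 0)
      = R.basis.repr h (r, s, l) * R.basis.repr h (0, 0, m) := by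
    intro r s l m
    rw [← R.repr_comul_E1 h r s l m, hΔ, Module.Basis.tensorProduct_repr_tmul_apply, smul_eq_mul]
    exact mul_comm _ _
  have E2 : ∀ l r' s' l' : Fin n,
      (if l' = l then R.basis.repr h (r', s', l) else 0)
      = R.basis.repr h (0, 0, l) * R.basis.repr h (r', s', l') := by
    intro l r' s' l'
    rw [← R.repr_comul_E2 h l r' s' l', hΔ, Module.Basis.tensorProduct_repr_tmul_apply, smul_eq_mul]
    exact mul_comm _ _
  have E3 : ∀ r l s' m : Fin n,
      (if (m : ℕ) = ((r : ℕ) + (l : ℕ)) % n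
        then (ω⁻¹) ^ ((r : ℕ) * (s' : ℕ)) * R.basis.repr h (r, s', l) else 0)
      = R.basis.repr h (r, 0, l) * R.basis.repr h (0, s', m) := by
    intro r l s' m
    rw [← R.repr_comul_E3 h r l s' m, hΔ, Module.Basis.tensorProduct_repr_tmul_apply, smul_eq_mul]
    exact mul_comm _ _
  have hex : ∃ v, R.basis.repr h v ≠ 0 := by
    by_contra hall
    push_neg at hall
    exact hne (R.basis.repr.injective (by ext v; simp [hall v]))
  obtain ⟨⟨a₀, b₀, l₀⟩, hv₀⟩ := hex
  -- c (0,0,l₀) = 1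
  have hd : R.basis.repr h (0, 0, l₀) = 1 := by
    have h2 := E2 l₀ a₀ b₀ l₀
    rw [if_pos rfl] at h2
    have : (R.basis.repr h (0, 0, l₀) - 1) * R.basis.repr h (a₀, b₀, l₀) = 0 := by
      linear_combination -h2
    rcases mul_eq_zero.mp this with h' | h'
    · exact sub_eq_zero.mp h'
    · exact absurd h' hv₀
  have huniq : ∀ m : Fin n, m ≠ l₀ → R.basis.repr h (0, 0, m) = 0 := by
    intro m hm
    have h1 := E1 0 0 l₀ m
    rw [if_neg (fun hc : (m : ℕ) = (((0:Fin n) : ℕ) + ((0:Fin n) : ℕ) + (l₀ : ℕ)) % n => by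
      apply hm
      apply Fin.ext
      simp only [Fin.val_zero, Nat.zero_add, Nat.mod_eq_of_lt l₀.isLt] at hc
      exact hc)] at h1
    rw [hd, one_mul] at h1
    exact h1.symm
  have hmain : ∀ v : Fin n × Fin n × Fin n, v ≠ (0, 0, l₀) → R.basis.repr h v = 0 := by
    rintro ⟨r, s, l⟩ hv
    by_contra hcv
    have hl : l = l₀ := by
      by_contra hl
      have h2 := E2 l r s l
      rw [if_pos rfl] at h2
      have h3 := E2 l₀ r s l  -- if l = l₀ false
      rw [if_neg hl] at h3
      -- use E2 with outer l' := l, first index l': careful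
      -- h2 : c (r,s,l) = c (0,0,l) * c (r,s,l)
      -- also huniq-type: we need c(0,0,l) ∈ {0}: but l ≠ l₀ so c (0,0,l) = 0
      rw [huniq l hl, zero_mul] at h2
      exact hcv h2
    subst hl
    -- (r+s) % n = 0
    have h1 := E1 r s l ⟨((r : ℕ) + (s : ℕ) + (l : ℕ)) % n, Nat.mod_lt _ R.npos⟩
    rw [if_pos rfl] at h1
    have hmk : (⟨((r : ℕ) + (s : ℕ) + (l : ℕ)) % n, Nat.mod_lt _ R.npos⟩ : Fin n) = l := by
      by_contra hk
      rw [huniq _ hk, mul_zero] at h1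
      exact hcv h1
    have hmkv : ((r : ℕ) + (s : ℕ) + (l : ℕ)) % n = (l : ℕ) := congrArg Fin.val hmk
    have hrs : ((r : ℕ) + (s : ℕ)) % n = 0 := by
      have hcan : ((r : ℕ) + (s : ℕ) + (l : ℕ)) % n = (0 + (l : ℕ)) % n := by
        rw [Nat.zero_add, Nat.mod_eq_of_lt l.isLt, hmkv]
      have := Nat.ModEq.add_right_cancel' (l : ℕ) hcan
      simpa [Nat.ModEq] using this
    have hcases : (r : ℕ) + (s : ℕ) = 0 ∨ (r : ℕ) + (s : ℕ) = n := by
      rcases Nat.lt_or_ge ((r : ℕ) + (s : ℕ)) n with hlt | hge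
      · left; rwa [Nat.mod_eq_of_lt hlt] at hrs
      · right
        have hb : (r : ℕ) + (s : ℕ) = n + ((r : ℕ) + (s : ℕ) - n) := by omega
        rw [hb, Nat.add_mod_left] at hrs
        have hlt2 : (r : ℕ) + (s : ℕ) - n < n := by
          have := r.isLt; have := s.isLt; omega
        rw [Nat.mod_eq_of_lt hlt2] at hrs
        omega
    rcases hcases with h0 | hn'
    · apply hv
      simp only [Prod.mk.injEq]
      refine ⟨Fin.ext ?_, Fin.ext ?_, trivial⟩
      · rw [Fin.val_zero]; omega
      · rw [Fin.val_zero]; omega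
    · have hr0 : 0 < (r : ℕ) := by have := s.isLt; omega
      have hs0 : 0 < (s : ℕ) := by have := r.isLt; omega
      have hcr0 : R.basis.repr h (r, 0, l) = 0 := by
        by_contra hc
        have h1' := E1 r 0 l ⟨((r : ℕ) + ((0 : Fin n) : ℕ) + (l : ℕ)) % n, Nat.mod_lt _ R.npos⟩
        rw [if_pos rfl] at h1'
        have hmk' : (⟨((r : ℕ) + ((0 : Fin n) : ℕ) + (l : ℕ)) % n,
            Nat.mod_lt _ R.npos⟩ : Fin n) = l := by
          by_contra hk
          rw [huniq _ hk, mul_zero] at h1'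
          exact hc h1'
        have hmkv' := congrArg Fin.val hmk'
        simp only [Fin.val_zero, Nat.add_zero] at hmkv'
        -- (r + l) % n = l  ⇒ r % n = 0 ⇒ r = 0, contra
        have hcan : ((r : ℕ) + (l : ℕ)) % n = (0 + (l : ℕ)) % n := by
          rw [Nat.zero_add, Nat.mod_eq_of_lt l.isLt]
          exact hmkv'
        have := Nat.ModEq.add_right_cancel' (l : ℕ) hcan
        have hr' : (r : ℕ) % n = 0 := by simpa [Nat.ModEq] using this
        rw [Nat.mod_eq_of_lt r.isLt] at hr'
        omega
      have h3 := E3 r l s ⟨((r : ℕ) + (l : ℕ)) % n, Nat.mod_lt _ R.npos⟩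
      rw [if_pos rfl, hcr0, zero_mul] at h3
      have hωinv : (ω⁻¹ : ℂ) ^ ((r : ℕ) * (s : ℕ)) ≠ 0 :=
        pow_ne_zero _ (inv_ne_zero R.omega_ne)
      exact hcv ((mul_eq_zero.mp h3).resolve_left hωinv)
  refine ⟨l₀, ?_⟩
  have := R.eq_smul_basis_of_repr h (0, 0, l₀) hmain
  rw [hd, one_smul, R.basis_eq] at this
  simpa using this

lemma repr_one (R : RadfordAlgebra n ω H) (v : Fin n × Fin n × Fin n) :
    R.basis.repr (1 : H) v
      = if (v.1 : ℕ) = 0 ∧ (v.2.1 : ℕ) = 0 ∧ (v.2.2 : ℕ) = 0 then 1 else 0 := by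
  have e : R.y ^ 0 * R.x ^ 0 * R.g ^ 0 = (1 : H) := by simp
  rw [← e, R.repr_mono']
  simp [Nat.zero_mod]
  congr

lemma repr_gpow (R : RadfordAlgebra n ω H) (t : ℕ) (v : Fin n × Fin n × Fin n) :
    R.basis.repr (R.g ^ t) v
      = if (v.1 : ℕ) = 0 ∧ (v.2.1 : ℕ) = 0 ∧ (v.2.2 : ℕ) = t % n then 1 else 0 := by
  have e : R.y ^ 0 * R.x ^ 0 * R.g ^ t = R.g ^ t := by simp
  rw [← e, R.repr_mono']

lemma skew_constraints [NeZero n] (R : RadfordAlgebra n ω H) (l₀ : Fin n) (p : H)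
    (hΔ : Coalgebra.comul (R := ℂ) p = p ⊗ₜ[ℂ] (R.g ^ (l₀ : ℕ)) + (1 : H) ⊗ₜ[ℂ] p) :
    (∀ v : Fin n × Fin n × Fin n, (v.2.2 : ℕ) ≠ 0 → v ≠ (0, 0, l₀) → R.basis.repr p v = 0) ∧
    (∀ v : Fin n × Fin n × Fin n, v ≠ (0, 0, 0) →
      ((v.1 : ℕ) + (v.2.1 : ℕ) + (v.2.2 : ℕ)) % n ≠ (l₀ : ℕ) → R.basis.repr p v = 0) ∧
    (∀ v : Fin n × Fin n × Fin n, (v.1 : ℕ) ≠ 0 → (v.2.1 : ℕ) ≠ 0 → R.basis.repr p v = 0) := by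
  have hRHS : ∀ v w : Fin n × Fin n × Fin n,
      (R.basis.tensorProduct R.basis).repr (Coalgebra.comul (R := ℂ) p) (v, w)
        = R.basis.repr p v
            * (if (w.1 : ℕ) = 0 ∧ (w.2.1 : ℕ) = 0 ∧ (w.2.2 : ℕ) = (l₀ : ℕ) then 1 else 0)
          + (if (v.1 : ℕ) = 0 ∧ (v.2.1 : ℕ) = 0 ∧ (v.2.2 : ℕ) = 0 then 1 else 0)
            * R.basis.repr p w := by
    intro v w
    rw [hΔ, map_add, Finsupp.add_apply, Module.Basis.tensorProduct_repr_tmul_apply,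
      Module.Basis.tensorProduct_repr_tmul_apply, R.repr_gpow, R.repr_one, smul_eq_mul, smul_eq_mul,
      Nat.mod_eq_of_lt l₀.isLt]
    ring
  refine ⟨?_, ?_, ?_⟩
  · rintro ⟨r, s, l⟩ hl hne
    have h2 := R.repr_comul_E2 p l r s l
    rw [if_pos rfl, hRHS] at h2
    rw [if_neg, if_neg, mul_zero, zero_mul, add_zero] at h2
    · exact h2.symm
    · rintro ⟨-, -, h3⟩
      exact hl h3
    · rintro ⟨h1', h2', h3'⟩
      apply hne
      simp only [Prod.mk.injEq]
      exact ⟨Fin.ext (by rw [Fin.val_zero]; exact h1'),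
        Fin.ext (by rw [Fin.val_zero]; exact h2'), Fin.ext h3'⟩
  · rintro ⟨r, s, l⟩ hne hmod
    have h1 := R.repr_comul_E1 p r s l ⟨((r : ℕ) + (s : ℕ) + (l : ℕ)) % n, Nat.mod_lt _ R.npos⟩
    rw [if_pos rfl, hRHS] at h1
    rw [if_neg, if_neg, mul_zero, zero_mul, add_zero] at h1
    · exact h1.symm
    · rintro ⟨h1', h2', h3'⟩
      apply hne
      simp only [Prod.mk.injEq]
      exact ⟨Fin.ext (by rw [Fin.val_zero]; exact h1'),
        Fin.ext (by rw [Fin.val_zero]; exact h2'),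
        Fin.ext (by rw [Fin.val_zero]; exact h3')⟩
    · rintro ⟨-, -, h3⟩
      exact hmod h3
  · rintro ⟨r, s, l⟩ hr hs
    have h3 := R.repr_comul_E3 p r l s ⟨((r : ℕ) + (l : ℕ)) % n, Nat.mod_lt _ R.npos⟩
    rw [if_pos rfl, hRHS] at h3
    rw [if_neg, if_neg, mul_zero, zero_mul, add_zero] at h3
    · have hωinv : (ω⁻¹ : ℂ) ^ ((r : ℕ) * (s : ℕ)) ≠ 0 :=
        pow_ne_zero _ (inv_ne_zero R.omega_ne)
      exact (mul_eq_zero.mp h3.symm).resolve_left hωinv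
    · rintro ⟨h1', -, -⟩
      exact hr h1'
    · rintro ⟨-, h2', -⟩
      exact hs h2'

end Lemmas
end RadfordAlgebra

namespace HopfStarStructure

variable {H : Type*} [Ring H] [HopfAlgebra ℂ H] (st : HopfStarStructure H)

lemma star_one' : st.star 1 = 1 := by
  have h := st.star_mul 1 (st.star 1)
  rw [one_mul, st.star_star] at h
  rw [one_mul] at h
  exact h.symm

lemma star_zero' : st.star 0 = 0 := by
  have h := st.star_add 0 0
  rw [add_zero] at h
  exact (left_eq_add.mp h)

lemma star_pow' (a : H) (k : ℕ) : st.star (a ^ k) = (st.star a) ^ k := by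
  induction k with
  | zero => simpa using st.star_one'
  | succ k ih => rw [pow_succ, st.star_mul, ih, ← pow_succ']

end HopfStarStructure

/-- for `n > 2`, every `*`-structure on the Radford algebra `H`
is of the form `g* = g`, `x* = α x`, `y* = β y` with `|α| = |β| = 1`. -/
theorem radford_star_classification_of_two_lt
    {n : ℕ} {ω : ℂ} {H : Type*} [Ring H] [HopfAlgebra ℂ H]
    (hn : 2 < n) (R : RadfordAlgebra n ω H) (st : HopfStarStructure H) :
    st.star R.g = R.g ∧
      ∃ α β : ℂ, ‖α‖ = 1 ∧ ‖β‖ = 1 ∧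
        st.star R.x = α • R.x ∧ st.star R.y = β • R.y := by
  haveI : NeZero n := ⟨by omega⟩
  have hone : ((1 : Fin n) : ℕ) = 1 := by
    rw [Fin.val_one']
    exact Nat.mod_eq_of_lt (by omega)
  have hgB : R.basis ((0 : Fin n), (0 : Fin n), (1 : Fin n)) = R.g := by
    rw [R.basis_eq, hone]
    simp
  have hxB : R.basis ((0 : Fin n), (1 : Fin n), (0 : Fin n)) = R.x := by
    rw [R.basis_eq, hone]
    simp
  have hyB : R.basis ((1 : Fin n), (0 : Fin n), (0 : Fin n)) = R.y := by
    rw [R.basis_eq, hone]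
    simp
  have hgne : R.g ≠ 0 := hgB ▸ R.basis.ne_zero _
  have hxne : R.x ≠ 0 := hxB ▸ R.basis.ne_zero _
  have hyne : R.y ≠ 0 := hyB ▸ R.basis.ne_zero _
  have hsgne : st.star R.g ≠ 0 := by
    intro h0
    apply hgne
    rw [← st.star_star R.g, h0, st.star_zero']
  have hΔg : Coalgebra.comul (R := ℂ) (st.star R.g)
      = (st.star R.g) ⊗ₜ[ℂ] (st.star R.g) := by
    rw [st.comul_star, R.comul_g, st.starTensor_tmul]
  obtain ⟨l₀, hgl⟩ := R.grouplike_classify (st.star R.g) hsgne hΔg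
  have hsq : R.g ^ (1 : ℕ) = R.g ^ ((l₀ : ℕ) * (l₀ : ℕ)) := by
    rw [pow_one]
    calc R.g = st.star (st.star R.g) := (st.star_star _).symm
      _ = st.star (R.g ^ (l₀ : ℕ)) := by rw [hgl]
      _ = (st.star R.g) ^ (l₀ : ℕ) := st.star_pow' _ _
      _ = (R.g ^ (l₀ : ℕ)) ^ (l₀ : ℕ) := by rw [hgl]
      _ = R.g ^ ((l₀ : ℕ) * (l₀ : ℕ)) := by rw [← pow_mul]
  have hl₀sq : ((l₀ : ℕ) * (l₀ : ℕ)) % n = 1 := by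
    have h := (R.gpow_inj hsq).symm
    rwa [Nat.mod_eq_of_lt (by omega : 1 < n)] at h
  have hωne := R.omega_ne
  have hω1 : ω ≠ 1 := R.hω.ne_one R.hn
  have hωinv1 : ω⁻¹ ≠ 1 := fun h => hω1 (by rw [← inv_inv ω, h, inv_one])
  have hω2 : ω ≠ ω⁻¹ := by
    intro h
    have h2 : ω ^ 2 = 1 := by
      rw [sq]
      nth_rewrite 1 [h]
      exact inv_mul_cancel₀ hωne
    have hdvd : n ∣ 2 := R.hω.dvd_of_pow_eq_one 2 h2
    have := Nat.le_of_dvd (by omega) hdvd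
    omega
  have hconj : (starRingEnd ℂ) ω = ω⁻¹ := by
    have hnorm : ‖ω‖ = 1 := Complex.norm_eq_one_of_pow_eq_one R.hω.pow_eq_one (by omega)
    exact (Complex.inv_eq_conj hnorm).symm
  have hωsq : ω ^ ((l₀ : ℕ) * (l₀ : ℕ)) = ω := by
    rw [R.omega_pow_mod, hl₀sq, pow_one]
  -- =================== analysis of star x ===================
  have hΔx : Coalgebra.comul (R := ℂ) (st.star R.x)
      = (st.star R.x) ⊗ₜ[ℂ] (R.g ^ (l₀ : ℕ)) + (1 : H) ⊗ₜ[ℂ] (st.star R.x) := by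
    rw [st.comul_star, R.comul_x, st.starTensor_add, st.starTensor_tmul,
      st.starTensor_tmul, hgl, st.star_one']
  obtain ⟨C1, C2, C3⟩ := R.skew_constraints l₀ (st.star R.x) hΔx
  have hrelx : R.g ^ (l₀ : ℕ) * st.star R.x = ω⁻¹ • (st.star R.x * R.g ^ (l₀ : ℕ)) := by
    have h := congrArg st.star R.rel_xg
    rw [st.star_mul, st.star_smul, st.star_mul, hgl, hconj] at h
    exact h
  have keyx : ∀ r s l : Fin n,
      ω ^ ((l₀ : ℕ) * (r : ℕ)) * (ω⁻¹) ^ ((l₀ : ℕ) * (s : ℕ))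
          * R.basis.repr (st.star R.x) (r, s, l)
        = ω⁻¹ * R.basis.repr (st.star R.x) (r, s, l) := by
    intro r s l
    have hm : ((⟨((l : ℕ) + (l₀ : ℕ)) % n, Nat.mod_lt _ R.npos⟩ : Fin n) : ℕ)
        = ((l : ℕ) + (l₀ : ℕ)) % n := rfl
    have h := congrArg (fun z => R.basis.repr z
      (r, s, ⟨((l : ℕ) + (l₀ : ℕ)) % n, Nat.mod_lt _ R.npos⟩)) hrelx
    rw [R.repr_gpow_mul (st.star R.x) (l₀ : ℕ) r s l _ hm, map_smul, Finsupp.smul_apply,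
      smul_eq_mul, R.repr_mul_gpow (st.star R.x) (l₀ : ℕ) r s l _ hm] at h
    exact h
  have hxv : ∀ v : Fin n × Fin n × Fin n, v ≠ ((0 : Fin n), l₀, (0 : Fin n)) →
      R.basis.repr (st.star R.x) v = 0 := by
    rintro ⟨r, s, l⟩ hv
    by_contra hc
    have hkey := keyx r s l
    have hcancel : ∀ a b : ℂ,
        a * R.basis.repr (st.star R.x) (r, s, l) = b * R.basis.repr (st.star R.x) (r, s, l)
          → a = b := by
      intro a b hab
      have hz : (a - b) * R.basis.repr (st.star R.x) (r, s, l) = 0 := by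
        linear_combination hab
      exact sub_eq_zero.mp ((mul_eq_zero.mp hz).resolve_right hc)
    have hv' : ¬((r : ℕ) = 0 ∧ (s : ℕ) = (l₀ : ℕ) ∧ (l : ℕ) = 0) := by
      rintro ⟨h1, h2, h3⟩
      exact hv (by simp only [Prod.ext_iff, Fin.ext_iff, Fin.val_zero]; exact ⟨h1, h2, h3⟩)
    by_cases hl : (l : ℕ) = 0
    · by_cases hv000 : (r : ℕ) = 0 ∧ (s : ℕ) = 0
      · obtain ⟨hr0, hs0⟩ := hv000
        rw [hr0, hs0] at hkey
        simp only [Nat.mul_zero, pow_zero, one_mul, mul_one] at hkey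
        exact hωinv1 (hcancel 1 ω⁻¹ (by rw [one_mul]; exact hkey)).symm
      · have hmod : ((r : ℕ) + (s : ℕ) + (l : ℕ)) % n = (l₀ : ℕ) := by
          by_contra hm'
          refine hc (C2 (r, s, l) ?_ hm')
          intro he
          apply hv000
          have h3 : (r : ℕ) = 0 ∧ (s : ℕ) = 0 ∧ (l : ℕ) = 0 := by
            simpa only [Prod.ext_iff, Fin.ext_iff, Fin.val_zero] using he
          exact ⟨h3.1, h3.2.1⟩
        have hrs : (r : ℕ) = 0 ∨ (s : ℕ) = 0 := by
          by_contra hb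
          push_neg at hb
          exact hc (C3 (r, s, l) hb.1 hb.2)
        rcases hrs with hr0 | hs0
        · have hs : (s : ℕ) = (l₀ : ℕ) := by
            rw [hr0, hl] at hmod
            simpa [Nat.mod_eq_of_lt s.isLt] using hmod
          exact hv' ⟨hr0, hs, hl⟩
        · have hr : (r : ℕ) = (l₀ : ℕ) := by
            rw [hs0, hl] at hmod
            simpa [Nat.mod_eq_of_lt r.isLt] using hmod
          rw [hr, hs0] at hkey
          simp only [Nat.mul_zero, pow_zero, mul_one] at hkey
          rw [hωsq] at hkey
          exact hω2 (hcancel ω ω⁻¹ hkey)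
    · have hv00l : (r : ℕ) = 0 ∧ (s : ℕ) = 0 ∧ (l : ℕ) = (l₀ : ℕ) := by
        by_contra h'
        refine hc (C1 (r, s, l) hl ?_)
        intro he
        apply h'
        simpa only [Prod.ext_iff, Fin.ext_iff, Fin.val_zero] using he
      obtain ⟨hr0, hs0, -⟩ := hv00l
      rw [hr0, hs0] at hkey
      simp only [Nat.mul_zero, pow_zero, one_mul, mul_one] at hkey
      exact hωinv1 (hcancel 1 ω⁻¹ (by rw [one_mul]; exact hkey)).symm
  have hpeq := R.eq_smul_basis_of_repr (st.star R.x) ((0 : Fin n), l₀, (0 : Fin n)) hxv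
  have hBx : R.basis ((0 : Fin n), l₀, (0 : Fin n)) = R.x ^ (l₀ : ℕ) := by
    rw [R.basis_eq]; simp
  rw [hBx] at hpeq
  set α := R.basis.repr (st.star R.x) ((0 : Fin n), l₀, (0 : Fin n)) with hαdef
  -- =================== l₀ = 1 ===================
  have hl₀1 : (l₀ : ℕ) = 1 := by
    by_contra hne1
    have hl₀ne : (l₀ : ℕ) ≠ 0 := by
      intro h0
      rw [h0] at hl₀sq
      simp at hl₀sq

    have h2le : 2 ≤ (l₀ : ℕ) := by omega
    have hq : (l₀ : ℕ) * (l₀ : ℕ) = n * (((l₀ : ℕ) * (l₀ : ℕ)) / n) + 1 := by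
      conv_lhs => rw [← Nat.div_add_mod ((l₀ : ℕ) * (l₀ : ℕ)) n]
      rw [hl₀sq]
    have hqne : ((l₀ : ℕ) * (l₀ : ℕ)) / n ≠ 0 := by
      intro h0
      rw [h0, Nat.mul_zero, Nat.zero_add] at hq
      nlinarith
    have hx0 : R.x ^ ((l₀ : ℕ) * (l₀ : ℕ)) = 0 := by
      rw [hq, pow_add, pow_mul, R.x_pow, zero_pow hqne, zero_mul]
    apply hxne
    calc R.x = st.star (st.star R.x) := (st.star_star _).symm
      _ = st.star (α • R.x ^ (l₀ : ℕ)) := by rw [← hpeq]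
      _ = (starRingEnd ℂ α) • st.star (R.x ^ (l₀ : ℕ)) := st.star_smul _ _
      _ = (starRingEnd ℂ α) • (st.star R.x) ^ (l₀ : ℕ) := by rw [st.star_pow']
      _ = (starRingEnd ℂ α) • (α • R.x ^ (l₀ : ℕ)) ^ (l₀ : ℕ) := by rw [hpeq]
      _ = 0 := by
          rw [smul_pow, ← pow_mul, hx0, smul_zero, smul_zero]
  have hpx : st.star R.x = α • R.x := by
    rw [hpeq, hl₀1, pow_one]
  -- =================== analysis of star y ===================
  have hΔy : Coalgebra.comul (R := ℂ) (st.star R.y)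
      = (st.star R.y) ⊗ₜ[ℂ] (R.g ^ (l₀ : ℕ)) + (1 : H) ⊗ₜ[ℂ] (st.star R.y) := by
    rw [st.comul_star, R.comul_y, st.starTensor_add, st.starTensor_tmul,
      st.starTensor_tmul, hgl, st.star_one']
  obtain ⟨D1, D2, D3⟩ := R.skew_constraints l₀ (st.star R.y) hΔy
  have hrely : R.g ^ (l₀ : ℕ) * st.star R.y = ω • (st.star R.y * R.g ^ (l₀ : ℕ)) := by
    have h := congrArg st.star R.rel_gy
    rw [st.star_mul, st.star_smul, st.star_mul, hgl, hconj] at h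
    -- h : st.star R.y * R.g ^ l₀ = ω⁻¹ • (R.g ^ l₀ * st.star R.y)
    rw [h, smul_smul, mul_inv_cancel₀ hωne, one_smul]
  have keyy : ∀ r s l : Fin n,
      ω ^ ((l₀ : ℕ) * (r : ℕ)) * (ω⁻¹) ^ ((l₀ : ℕ) * (s : ℕ))
          * R.basis.repr (st.star R.y) (r, s, l)
        = ω * R.basis.repr (st.star R.y) (r, s, l) := by
    intro r s l
    have hm : ((⟨((l : ℕ) + (l₀ : ℕ)) % n, Nat.mod_lt _ R.npos⟩ : Fin n) : ℕ)
        = ((l : ℕ) + (l₀ : ℕ)) % n := rfl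
    have h := congrArg (fun z => R.basis.repr z
      (r, s, ⟨((l : ℕ) + (l₀ : ℕ)) % n, Nat.mod_lt _ R.npos⟩)) hrely
    rw [R.repr_gpow_mul (st.star R.y) (l₀ : ℕ) r s l _ hm, map_smul, Finsupp.smul_apply,
      smul_eq_mul, R.repr_mul_gpow (st.star R.y) (l₀ : ℕ) r s l _ hm] at h
    exact h
  have hyv : ∀ v : Fin n × Fin n × Fin n, v ≠ (l₀, (0 : Fin n), (0 : Fin n)) →
      R.basis.repr (st.star R.y) v = 0 := by
    rintro ⟨r, s, l⟩ hv
    by_contra hc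
    have hkey := keyy r s l
    have hcancel : ∀ a b : ℂ,
        a * R.basis.repr (st.star R.y) (r, s, l) = b * R.basis.repr (st.star R.y) (r, s, l)
          → a = b := by
      intro a b hab
      have hz : (a - b) * R.basis.repr (st.star R.y) (r, s, l) = 0 := by
        linear_combination hab
      exact sub_eq_zero.mp ((mul_eq_zero.mp hz).resolve_right hc)
    have hv' : ¬((r : ℕ) = (l₀ : ℕ) ∧ (s : ℕ) = 0 ∧ (l : ℕ) = 0) := by
      rintro ⟨h1, h2, h3⟩
      exact hv (by simp only [Prod.ext_iff, Fin.ext_iff, Fin.val_zero]; exact ⟨h1, h2, h3⟩)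
    by_cases hl : (l : ℕ) = 0
    · by_cases hv000 : (r : ℕ) = 0 ∧ (s : ℕ) = 0
      · obtain ⟨hr0, hs0⟩ := hv000
        rw [hr0, hs0] at hkey
        simp only [Nat.mul_zero, pow_zero, one_mul, mul_one] at hkey
        exact hω1 (hcancel 1 ω (by rw [one_mul]; exact hkey)).symm
      · have hmod : ((r : ℕ) + (s : ℕ) + (l : ℕ)) % n = (l₀ : ℕ) := by
          by_contra hm'
          refine hc (D2 (r, s, l) ?_ hm')
          intro he
          apply hv000
          have h3 : (r : ℕ) = 0 ∧ (s : ℕ) = 0 ∧ (l : ℕ) = 0 := by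
            simpa only [Prod.ext_iff, Fin.ext_iff, Fin.val_zero] using he
          exact ⟨h3.1, h3.2.1⟩
        have hrs : (r : ℕ) = 0 ∨ (s : ℕ) = 0 := by
          by_contra hb
          push_neg at hb
          exact hc (D3 (r, s, l) hb.1 hb.2)
        rcases hrs with hr0 | hs0
        · have hs : (s : ℕ) = (l₀ : ℕ) := by
            rw [hr0, hl] at hmod
            simpa [Nat.mod_eq_of_lt s.isLt] using hmod
          rw [hr0, hs] at hkey
          simp only [Nat.mul_zero, pow_zero, one_mul] at hkey
          rw [inv_pow, hωsq] at hkey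
          exact hω2 (hcancel ω ω⁻¹ hkey.symm)
        · have hr : (r : ℕ) = (l₀ : ℕ) := by
            rw [hs0, hl] at hmod
            simpa [Nat.mod_eq_of_lt r.isLt] using hmod
          exact hv' ⟨hr, hs0, hl⟩
    · have hv00l : (r : ℕ) = 0 ∧ (s : ℕ) = 0 ∧ (l : ℕ) = (l₀ : ℕ) := by
        by_contra h'
        refine hc (D1 (r, s, l) hl ?_)
        intro he
        apply h'
        simpa only [Prod.ext_iff, Fin.ext_iff, Fin.val_zero] using he
      obtain ⟨hr0, hs0, -⟩ := hv00l
      rw [hr0, hs0] at hkey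
      simp only [Nat.mul_zero, pow_zero, one_mul, mul_one] at hkey
      exact hω1 (hcancel 1 ω (by rw [one_mul]; exact hkey)).symm
  have hqeq := R.eq_smul_basis_of_repr (st.star R.y) (l₀, (0 : Fin n), (0 : Fin n)) hyv
  have hBy : R.basis (l₀, (0 : Fin n), (0 : Fin n)) = R.y ^ (l₀ : ℕ) := by
    rw [R.basis_eq]; simp
  rw [hBy, hl₀1, pow_one] at hqeq
  set β := R.basis.repr (st.star R.y) (l₀, (0 : Fin n), (0 : Fin n)) with hβdef
  -- =================== conclusion ===================
  have habs : ∀ (a : H) (c : ℂ), a ≠ 0 → st.star a = c • a → ‖c‖ = 1 := by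
    intro a c hane hsa
    have hmod : (starRingEnd ℂ) c * c = 1 := by
      have haa : a = ((starRingEnd ℂ) c * c) • a := by
        calc a = st.star (st.star a) := (st.star_star _).symm
          _ = st.star (c • a) := by rw [hsa]
          _ = (starRingEnd ℂ c) • st.star a := st.star_smul _ _
          _ = (starRingEnd ℂ c) • (c • a) := by rw [hsa]
          _ = ((starRingEnd ℂ) c * c) • a := by rw [smul_smul]
      have hz : ((starRingEnd ℂ) c * c - 1) • a = 0 := by
        rw [sub_smul, one_smul, ← haa, sub_self]
      rcases smul_eq_zero.mp hz with h' | h'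
      · exact sub_eq_zero.mp h'
      · exact absurd h' hane
    have h1 : Complex.normSq c = 1 := by
      rw [mul_comm, Complex.mul_conj] at hmod
      exact_mod_cast hmod
    have h2 : ‖c‖ ^ 2 = 1 := by rw [Complex.sq_norm, h1]
    nlinarith [norm_nonneg c]
  refine ⟨by rw [hgl, hl₀1, pow_one], α, β,
    habs R.x α hxne hpx, habs R.y β hyne hqeq, hpx, hqeq⟩
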